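/- arXiv:1805.04677 — 2 statements merged into one kernel-verified Lean document; each statement's English description precedes it below -/
import Mathlib

section
/- For every a ∈ ℝ² in the interior of the first quadrant (a₁ > 0 and a₂ > 0) and every integer k ≥ 2, one has |E⁴_k(Σ₁, a)| ≤ |E⁴_{k−1}(Σ₁, a)| + |E¹_{k−1}(Σ₁, a)| + 2 and |E²_k(Σ₁, a)| ≤ |E⁴_{k−1}(Σ₁, a)|, where Σ₁ = {A₁, A₂}. -/
open Matrix Set

noncomputable section

/-- `XSeq S a k` is the set of all vectors `T_{k-1} ⋯ T_0 · a` with each `T_j ∈ S`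
(and `XSeq S a 0 = {a}`). -/
def XSeq {n : ℕ} (S : Set (Matrix (Fin n) (Fin n) ℝ)) (a : Fin n → ℝ) : ℕ → Set (Fin n → ℝ)
  | 0 => {a}
  | k + 1 => ⋃ A ∈ S, A.mulVec '' XSeq S a k

/-- `PHull S a k` is the convex hull of `XSeq S a k`. -/
def PHull {n : ℕ} (S : Set (Matrix (Fin n) (Fin n) ℝ)) (a : Fin n → ℝ) (k : ℕ) :
    Set (Fin n → ℝ) :=
  convexHull ℝ (XSeq S a k)

/-- `EPts S a k` is the set of extreme points of `PHull S a k`. -/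
def EPts {n : ℕ} (S : Set (Matrix (Fin n) (Fin n) ℝ)) (a : Fin n → ℝ) (k : ℕ) :
    Set (Fin n → ℝ) :=
  Set.extremePoints ℝ (PHull S a k)

/-- `NExt S a k` is the number of extreme points of `PHull S a k`. -/
def NExt {n : ℕ} (S : Set (Matrix (Fin n) (Fin n) ℝ)) (a : Fin n → ℝ) (k : ℕ) : ℕ :=
  (EPts S a k).ncard

def M1 : Matrix (Fin 2) (Fin 2) ℝ := !![0, 1; 1, 0]
def M2 : Matrix (Fin 2) (Fin 2) ℝ := !![1, 1; 0, 1]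
def M3 : Matrix (Fin 2) (Fin 2) ℝ := !![1, 0; 1, 1]
def M4 : Matrix (Fin 2) (Fin 2) ℝ := !![1, 1; 1, 0]
def M5 : Matrix (Fin 2) (Fin 2) ℝ := !![0, 1; 1, 1]

/-- Interior of the first quadrant. -/
def intQ1 : Set (Fin 2 → ℝ) := {c | 0 < c 0 ∧ 0 < c 1}
/-- Interior of the second quadrant. -/
def intQ2 : Set (Fin 2 → ℝ) := {c | c 0 < 0 ∧ 0 < c 1}
/-- Interior of the third quadrant. -/
def intQ3 : Set (Fin 2 → ℝ) := {c | c 0 < 0 ∧ c 1 < 0}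
/-- Interior of the fourth quadrant. -/
def intQ4 : Set (Fin 2 → ℝ) := {c | 0 < c 0 ∧ c 1 < 0}

/-- `EQuad S a k Q` is the set of extreme points of `PHull S a k` that maximize the linear
functional `x ↦ c ⬝ᵥ x` over `PHull S a k` for some `c ∈ Q`. -/
def EQuad (S : Set (Matrix (Fin 2) (Fin 2) ℝ)) (a : Fin 2 → ℝ) (k : ℕ)
    (Q : Set (Fin 2 → ℝ)) : Set (Fin 2 → ℝ) :=
  {p ∈ EPts S a k | ∃ c ∈ Q, ∀ x ∈ PHull S a k, c ⬝ᵥ x ≤ c ⬝ᵥ p}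

-- auxiliary lemmas
lemma m1_mulVec (x : Fin 2 → ℝ) : M1.mulVec x = ![x 1, x 0] := by
  funext i; fin_cases i <;>
    simp [M1, Matrix.mulVec, dotProduct, Fin.sum_univ_two]

lemma m2_mulVec (x : Fin 2 → ℝ) : M2.mulVec x = ![x 0 + x 1, x 1] := by
  funext i; fin_cases i <;>
    simp [M2, Matrix.mulVec, dotProduct, Fin.sum_univ_two]

lemma dot2 (c x : Fin 2 → ℝ) : c ⬝ᵥ x = c 0 * x 0 + c 1 * x 1 := by
  simp [dotProduct, Fin.sum_univ_two]

lemma xseq_succ (a : Fin 2 → ℝ) (k : ℕ) :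
    XSeq {M1, M2} a (k+1) = M1.mulVec '' XSeq {M1, M2} a k ∪ M2.mulVec '' XSeq {M1, M2} a k := by
  simp [XSeq]

lemma mem_xseq_succ {a : Fin 2 → ℝ} {x : Fin 2 → ℝ} {k : ℕ}
    {M : Matrix (Fin 2) (Fin 2) ℝ} (hM : M ∈ ({M1, M2} : Set (Matrix (Fin 2) (Fin 2) ℝ)))
    (hx : x ∈ XSeq {M1, M2} a k) : M.mulVec x ∈ XSeq {M1, M2} a (k+1) := by
  show M.mulVec x ∈ ⋃ A ∈ ({M1, M2} : Set (Matrix (Fin 2) (Fin 2) ℝ)), A.mulVec '' XSeq {M1, M2} a k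
  exact Set.mem_biUnion hM ⟨x, hx, rfl⟩

lemma xseq_finite (a : Fin 2 → ℝ) : ∀ k, (XSeq {M1, M2} a k).Finite
  | 0 => Set.finite_singleton a
  | (k+1) => by
      rw [xseq_succ]
      exact ((xseq_finite a k).image _).union ((xseq_finite a k).image _)

lemma xseq_pos {a : Fin 2 → ℝ} (ha : 0 < a 0 ∧ 0 < a 1) :
    ∀ k, ∀ x ∈ XSeq {M1, M2} a k, 0 < x 0 ∧ 0 < x 1
  | 0 => by
      intro x hx
      have : x = a := hx
      rw [this]; exact ha
  | (k+1) => by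
      intro x hx
      rw [xseq_succ] at hx
      rcases hx with ⟨y, hy, rfl⟩ | ⟨y, hy, rfl⟩
      · obtain ⟨h0, h1⟩ := xseq_pos ha k y hy
        rw [m1_mulVec]
        constructor <;> simp [h0, h1]
      · obtain ⟨h0, h1⟩ := xseq_pos ha k y hy
        rw [m2_mulVec]
        constructor
        · show 0 < y 0 + y 1; linarith
        · show 0 < y 1; exact h1

lemma epts_subset {n : ℕ} (S : Set (Matrix (Fin n) (Fin n) ℝ)) (a : Fin n → ℝ) (k : ℕ) :
    EPts S a k ⊆ XSeq S a k :=
  fun _ hp => extremePoints_convexHull_subset hp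

lemma hull_le {s : Set (Fin 2 → ℝ)} {c : Fin 2 → ℝ} {m : ℝ}
    (h : ∀ x ∈ s, c ⬝ᵥ x ≤ m) : ∀ x ∈ convexHull ℝ s, c ⬝ᵥ x ≤ m := by
  have hlin : IsLinearMap ℝ (fun x : Fin 2 → ℝ => c ⬝ᵥ x) := by
    constructor
    · intro u v; simp only [dot2, Pi.add_apply]; ring
    · intro r u; simp only [dot2, Pi.smul_apply, smul_eq_mul]; ring
  intro x hx
  exact convexHull_min h (convex_halfSpace_le hlin m) hx

lemma m1_inj : Function.Injective (M1.mulVec) := by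
  intro x y h
  rw [m1_mulVec, m1_mulVec] at h
  have h0 : x 1 = y 1 := by simpa using congrFun h 0
  have h1 : x 0 = y 0 := by simpa using congrFun h 1
  funext i; fin_cases i
  · exact h1
  · exact h0

lemma m2_inj : Function.Injective (M2.mulVec) := by
  intro x y h
  rw [m2_mulVec, m2_mulVec] at h
  have h0 : x 0 + x 1 = y 0 + y 1 := by simpa using congrFun h 0
  have h1 : x 1 = y 1 := by simpa using congrFun h 1
  funext i; fin_cases i
  · show x 0 = y 0; linarith
  · exact h1

lemma extreme_pull {a : Fin 2 → ℝ} {k : ℕ} {M : Matrix (Fin 2) (Fin 2) ℝ}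
    (hM : M ∈ ({M1, M2} : Set (Matrix (Fin 2) (Fin 2) ℝ))) (hinj : Function.Injective M.mulVec)
    {q : Fin 2 → ℝ} (hq : q ∈ XSeq {M1, M2} a k) (hp : M.mulVec q ∈ EPts {M1, M2} a (k+1)) :
    q ∈ EPts {M1, M2} a k := by
  have himg : ∀ u ∈ PHull {M1, M2} a k, M.mulVec u ∈ PHull {M1, M2} a (k+1) := by
    intro u hu
    have h1 : M.mulVec u ∈ ⇑M.mulVecLin '' (convexHull ℝ (XSeq {M1, M2} a k)) :=
      ⟨u, hu, by simp⟩
    rw [M.mulVecLin.image_convexHull] at h1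
    refine convexHull_mono ?_ h1
    rintro _ ⟨y, hy, rfl⟩
    simpa using mem_xseq_succ hM hy
  rw [EPts, mem_extremePoints]
  refine ⟨subset_convexHull ℝ _ hq, ?_⟩
  intro u hu v hv hseg
  obtain ⟨t, s, ht, hs, hts, heq⟩ := hseg
  have hseg' : M.mulVec q ∈ openSegment ℝ (M.mulVec u) (M.mulVec v) := by
    refine ⟨t, s, ht, hs, hts, ?_⟩
    rw [← heq]
    simp [Matrix.mulVec_add, Matrix.mulVec_smul]
  have h1 := hp.2 (himg u hu) (himg v hv) hseg'
  exact ⟨hinj h1, hinj (hp.2 (himg v hv) (himg u hu) (by rwa [openSegment_symm]))⟩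

lemma dom4 {a : Fin 2 → ℝ} (ha : 0 < a 0 ∧ 0 < a 1) (j : ℕ) {c : Fin 2 → ℝ}
    (hc : c ∈ intQ4) :
    ∀ x ∈ XSeq {M1, M2} a (j+1), ∃ x' ∈ XSeq {M1, M2} a (j+1),
      c ⬝ᵥ M1.mulVec x < c ⬝ᵥ M2.mulVec x' := by
  obtain ⟨hc0, hc1⟩ := hc
  intro x hx
  rw [xseq_succ] at hx
  rcases hx with ⟨y, hy, rfl⟩ | ⟨y, hy, rfl⟩ <;>
    obtain ⟨hy0, hy1⟩ := xseq_pos ha j y hy <;>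
    refine ⟨M2.mulVec y, mem_xseq_succ (by simp) hy, ?_⟩ <;>
    simp [M1, M2, m1_mulVec, m2_mulVec, dot2, Matrix.vecHead, Matrix.vecTail] <;> nlinarith

lemma dom2 {a : Fin 2 → ℝ} (ha : 0 < a 0 ∧ 0 < a 1) (j : ℕ) {c : Fin 2 → ℝ}
    (hc : c ∈ intQ2) :
    ∀ x ∈ XSeq {M1, M2} a (j+1), ∃ x' ∈ XSeq {M1, M2} a (j+1),
      c ⬝ᵥ M2.mulVec x < c ⬝ᵥ M1.mulVec x' := by
  obtain ⟨hc0, hc1⟩ := hc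
  intro x hx
  rw [xseq_succ] at hx
  rcases hx with ⟨y, hy, rfl⟩ | ⟨y, hy, rfl⟩ <;>
    obtain ⟨hy0, hy1⟩ := xseq_pos ha j y hy <;>
    refine ⟨M2.mulVec y, mem_xseq_succ (by simp) hy, ?_⟩ <;>
    simp [M1, M2, m1_mulVec, m2_mulVec, dot2, Matrix.vecHead, Matrix.vecTail] <;> nlinarith

lemma not_mid {P : Set (Fin 2 → ℝ)} {u v w : Fin 2 → ℝ}
    (hu : u ∈ P) (hw : w ∈ P) (hv : v ∈ Set.extremePoints ℝ P)
    (h0u : u 0 = v 0) (h0w : w 0 = v 0) (h1 : u 1 < v 1) (h2 : v 1 < w 1) : False := by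
  have hd : 0 < w 1 - u 1 := by linarith
  have hseg : v ∈ openSegment ℝ u w := by
    refine ⟨(w 1 - v 1) / (w 1 - u 1), (v 1 - u 1) / (w 1 - u 1),
      by apply div_pos <;> linarith, by apply div_pos <;> linarith, by field_simp; ring, ?_⟩
    funext i; fin_cases i
    · show (w 1 - v 1) / (w 1 - u 1) * u 0 + (v 1 - u 1) / (w 1 - u 1) * w 0 = v 0
      rw [h0u, h0w]; field_simp; ring
    · show (w 1 - v 1) / (w 1 - u 1) * u 1 + (v 1 - u 1) / (w 1 - u 1) * w 1 = v 1
      field_simp; ring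
  have := hv.2 hu hw hseg
  rw [this] at h1
  exact lt_irrefl _ h1

lemma eq_of_coords {u v : Fin 2 → ℝ} (h0 : u 0 = v 0) (h1 : u 1 = v 1) : u = v := by
  funext i; fin_cases i
  · exact h0
  · exact h1

lemma s0_card (a : Fin 2 → ℝ) (k : ℕ) :
    ({q ∈ EPts {M1, M2} a k | ∀ x ∈ PHull {M1, M2} a k, x 0 ≤ q 0}).ncard ≤ 2 := by
  set T : Set (Fin 2 → ℝ) :=
    {q ∈ EPts {M1, M2} a k | ∀ x ∈ PHull {M1, M2} a k, x 0 ≤ q 0} with hT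
  by_contra hcon
  push_neg at hcon
  obtain ⟨t, htT, ht3⟩ := Set.exists_subset_card_eq (show 3 ≤ T.ncard by omega)
  obtain ⟨u, v, w, huv, huw, hvw, rfl⟩ := Set.ncard_eq_three.mp ht3
  have hu : u ∈ T := htT (by simp)
  have hv : v ∈ T := htT (by simp)
  have hw : w ∈ T := htT (by simp)
  have h0 : ∀ p ∈ T, ∀ q ∈ T, p 0 = q 0 := by
    intro p hp q hq
    have hpP : p ∈ PHull {M1, M2} a k := extremePoints_subset hp.1
    have hqP : q ∈ PHull {M1, M2} a k := extremePoints_subset hq.1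
    exact le_antisymm (hq.2 p hpP) (hp.2 q hqP)
  have mid : ∀ p ∈ T, ∀ q ∈ T, ∀ r ∈ T, p 1 < q 1 → q 1 < r 1 → False := by
    intro p hp q hq r hr hpq hqr
    exact not_mid (extremePoints_subset hp.1) (extremePoints_subset hr.1) hq.1
      (h0 p hp q hq) (h0 r hr q hq) hpq hqr
  have huv1 : u 1 ≠ v 1 := fun h => huv (eq_of_coords (h0 u hu v hv) h)
  have huw1 : u 1 ≠ w 1 := fun h => huw (eq_of_coords (h0 u hu w hw) h)
  have hvw1 : v 1 ≠ w 1 := fun h => hvw (eq_of_coords (h0 v hv w hw) h)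
  rcases lt_trichotomy (u 1) (v 1) with hab | hab | hab
  · rcases lt_trichotomy (v 1) (w 1) with hbc | hbc | hbc
    · exact mid u hu v hv w hw hab hbc
    · exact hvw1 hbc
    · rcases lt_trichotomy (u 1) (w 1) with hac | hac | hac
      · exact mid u hu w hw v hv hac hbc
      · exact huw1 hac
      · exact mid w hw u hu v hv hac hab
  · exact huv1 hab
  · rcases lt_trichotomy (u 1) (w 1) with hbc | hbc | hbc
    · exact mid v hv u hu w hw hab hbc
    · exact huw1 hbc
    · rcases lt_trichotomy (v 1) (w 1) with hac | hac | hac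
      · exact mid v hv w hw u hu hac hbc
      · exact hvw1 hac
      · exact mid w hw v hv u hu hac hab

set_option maxHeartbeats 1000000 in
lemma incl2 {a : Fin 2 → ℝ} (ha : 0 < a 0 ∧ 0 < a 1) (j : ℕ) :
    EQuad {M1, M2} a (j+2) intQ2 ⊆ M1.mulVec '' EQuad {M1, M2} a (j+1) intQ4 := by
  rintro p ⟨hpE, c, hc, hmax⟩
  have hpX : p ∈ XSeq {M1, M2} a (j+2) := epts_subset _ _ _ hpE
  rw [show j + 2 = (j+1) + 1 from rfl, xseq_succ] at hpX
  rcases hpX with ⟨q, hq, rfl⟩ | ⟨x, hx, rfl⟩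
  · refine ⟨q, ?_, rfl⟩
    have hqE : q ∈ EPts {M1, M2} a (j+1) :=
      extreme_pull (by simp) m1_inj hq hpE
    refine ⟨hqE, ![c 1, c 0], ⟨by simpa using hc.2, by simpa using hc.1⟩, ?_⟩
    have key : ∀ y ∈ XSeq {M1, M2} a (j+1), ![c 1, c 0] ⬝ᵥ y ≤ ![c 1, c 0] ⬝ᵥ q := by
      intro y hy
      have h1 : c ⬝ᵥ M1.mulVec y ≤ c ⬝ᵥ M1.mulVec q :=
        hmax _ (subset_convexHull ℝ _ (mem_xseq_succ (by simp) hy))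
      calc ![c 1, c 0] ⬝ᵥ y = c ⬝ᵥ M1.mulVec y := by
            simp [M1, dot2, m1_mulVec, Matrix.vecHead, Matrix.vecTail]; ring
        _ ≤ c ⬝ᵥ M1.mulVec q := h1
        _ = ![c 1, c 0] ⬝ᵥ q := by simp [M1, dot2, m1_mulVec, Matrix.vecHead, Matrix.vecTail]; ring
    exact hull_le key
  · exfalso
    obtain ⟨x', hx', hlt⟩ := dom2 ha j hc x hx
    have hle := hmax (M1.mulVec x')
      (subset_convexHull ℝ _ (mem_xseq_succ (by simp) hx'))
    linarith

set_option maxHeartbeats 1000000 in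
lemma incl4 {a : Fin 2 → ℝ} (ha : 0 < a 0 ∧ 0 < a 1) (j : ℕ) :
    EQuad {M1, M2} a (j+2) intQ4 ⊆ M2.mulVec ''
      (EQuad {M1, M2} a (j+1) intQ4 ∪ EQuad {M1, M2} a (j+1) intQ1 ∪
        {q ∈ EPts {M1, M2} a (j+1) | ∀ x ∈ PHull {M1, M2} a (j+1), x 0 ≤ q 0}) := by
  rintro p ⟨hpE, c, hc, hmax⟩
  have hpX : p ∈ XSeq {M1, M2} a (j+2) := epts_subset _ _ _ hpE
  rw [show j + 2 = (j+1) + 1 from rfl, xseq_succ] at hpX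
  rcases hpX with ⟨x, hx, rfl⟩ | ⟨q, hq, rfl⟩
  · exfalso
    obtain ⟨x', hx', hlt⟩ := dom4 ha j hc x hx
    have hle := hmax (M2.mulVec x')
      (subset_convexHull ℝ _ (mem_xseq_succ (by simp) hx'))
    linarith
  · refine ⟨q, ?_, rfl⟩
    have hqE : q ∈ EPts {M1, M2} a (j+1) :=
      extreme_pull (by simp) m2_inj hq hpE
    have key : ∀ y ∈ XSeq {M1, M2} a (j+1),
        ![c 0, c 0 + c 1] ⬝ᵥ y ≤ ![c 0, c 0 + c 1] ⬝ᵥ q := by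
      intro y hy
      have h1 : c ⬝ᵥ M2.mulVec y ≤ c ⬝ᵥ M2.mulVec q :=
        hmax _ (subset_convexHull ℝ _ (mem_xseq_succ (by simp) hy))
      calc ![c 0, c 0 + c 1] ⬝ᵥ y = c ⬝ᵥ M2.mulVec y := by
            simp [M2, dot2, m2_mulVec, Matrix.vecHead, Matrix.vecTail]; ring
        _ ≤ c ⬝ᵥ M2.mulVec q := h1
        _ = ![c 0, c 0 + c 1] ⬝ᵥ q := by simp [M2, dot2, m2_mulVec, Matrix.vecHead, Matrix.vecTail]; ring
    have hkey' := hull_le key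
    rcases lt_trichotomy (c 0 + c 1) 0 with hs | hs | hs
    · exact Or.inl (Or.inl ⟨hqE, ![c 0, c 0 + c 1], ⟨by simpa using hc.1, by simpa using hs⟩, hkey'⟩)
    · refine Or.inr ⟨hqE, ?_⟩
      intro x hxP
      have h2 := hkey' x hxP
      simp only [dot2] at h2
      simp only [Matrix.cons_val_zero, Matrix.cons_val_one, Matrix.head_cons] at h2
      rw [hs] at h2
      have hc0 := hc.1
      nlinarith
    · exact Or.inl (Or.inr ⟨hqE, ![c 0, c 0 + c 1], ⟨by simpa using hc.1, by simpa using hs⟩, hkey'⟩)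

/-- For `a` in the interior of the first quadrant and `k ≥ 2`,
`|E⁴_k(Σ₁, a)| ≤ |E⁴_{k-1}(Σ₁, a)| + |E¹_{k-1}(Σ₁, a)| + 2` and
`|E²_k(Σ₁, a)| ≤ |E⁴_{k-1}(Σ₁, a)|`. -/
theorem stmt12 (a : Fin 2 → ℝ) (ha : 0 < a 0 ∧ 0 < a 1) (k : ℕ) (hk : 2 ≤ k) :
    (EQuad {M1, M2} a k intQ4).ncard ≤
      (EQuad {M1, M2} a (k - 1) intQ4).ncard + (EQuad {M1, M2} a (k - 1) intQ1).ncard + 2 ∧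
    (EQuad {M1, M2} a k intQ2).ncard ≤ (EQuad {M1, M2} a (k - 1) intQ4).ncard := by
  obtain ⟨j, rfl⟩ : ∃ j, k = j + 2 := ⟨k - 2, by omega⟩
  have hk1 : j + 2 - 1 = j + 1 := by omega
  rw [hk1]
  set E4 := EQuad {M1, M2} a (j+1) intQ4 with hE4
  set E1 := EQuad {M1, M2} a (j+1) intQ1 with hE1
  set S0 := {q ∈ EPts {M1, M2} a (j+1) | ∀ x ∈ PHull {M1, M2} a (j+1), x 0 ≤ q 0} with hS0
  have hXfin := xseq_finite a (j+1)
  have hE4fin : E4.Finite := hXfin.subset (fun p hp => epts_subset _ _ _ hp.1)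
  have hE1fin : E1.Finite := hXfin.subset (fun p hp => epts_subset _ _ _ hp.1)
  have hSfin : S0.Finite := hXfin.subset (fun p hp => epts_subset _ _ _ hp.1)
  constructor
  · calc (EQuad {M1, M2} a (j+2) intQ4).ncard
        ≤ (M2.mulVec '' (E4 ∪ E1 ∪ S0)).ncard :=
          Set.ncard_le_ncard (incl4 ha j) (((hE4fin.union hE1fin).union hSfin).image _)
      _ = (E4 ∪ E1 ∪ S0).ncard := Set.ncard_image_of_injective _ m2_inj
      _ ≤ (E4 ∪ E1).ncard + S0.ncard := Set.ncard_union_le _ _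
      _ ≤ E4.ncard + E1.ncard + 2 := by
          have h1 := Set.ncard_union_le E4 E1
          have h2 := s0_card a (j+1)
          rw [← hS0] at h2
          omega
  · calc (EQuad {M1, M2} a (j+2) intQ2).ncard
        ≤ (M1.mulVec '' E4).ncard :=
          Set.ncard_le_ncard (incl2 ha j) (hE4fin.image _)
      _ = E4.ncard := Set.ncard_image_of_injective _ m1_inj

end
end

section
/- For every a ∈ ℝ² in the interior of the fourth quadrant (a₁ > 0 and a₂ < 0) and every integer k ≥ 2, the set X_k(Σ₁, a) ∩ (int Q₂ ∪ int Q₄) — i.e., the set of points of X_k(Σ₁, a) lying in the interior of the second or fourth quadrant — contains no more than 4k + 4 points, where Σ₁ = {A₁, A₂}. -/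
open Matrix Set

noncomputable section

def cstep (c : ℝ × ℝ) : ℝ × ℝ :=
  if c.2 < c.1 then (c.1 - c.2, c.2) else if c.1 < c.2 then (c.2 - c.1, c.1) else c

def cseq (p q : ℝ) : ℕ → ℝ × ℝ
  | 0 => (p, q)
  | j + 1 => cstep (cseq p q j)

def Dset (c : ℝ × ℝ) : Set (Fin 2 → ℝ) :=
  {![c.1, -c.2], ![-c.1, c.2], ![c.2, -c.1], ![-c.2, c.1]}

lemma cpos (p q : ℝ) (hp : 0 < p) (hq : 0 < q) :
    ∀ j, 0 < (cseq p q j).1 ∧ 0 < (cseq p q j).2 := by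
  intro j
  induction j with
  | zero => exact ⟨hp, hq⟩
  | succ j ih =>
    show 0 < (cstep (cseq p q j)).1 ∧ 0 < (cstep (cseq p q j)).2
    unfold cstep
    split_ifs with h1 h2
    · exact ⟨sub_pos.mpr h1, ih.2⟩
    · exact ⟨sub_pos.mpr h2, ih.1⟩
    · exact ih

lemma M1_mulVec (y : Fin 2 → ℝ) : M1.mulVec y = ![y 1, y 0] := by
  funext i; fin_cases i <;>
    simp [M1, Matrix.mulVec, dotProduct, Fin.sum_univ_two]

lemma M2_mulVec (y : Fin 2 → ℝ) : M2.mulVec y = ![y 0 + y 1, y 1] := by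
  funext i; fin_cases i <;>
    simp [M2, Matrix.mulVec, dotProduct, Fin.sum_univ_two]

lemma main (a : Fin 2 → ℝ) (ha0 : 0 < a 0) (ha1 : a 1 < 0) (k : ℕ) :
    ∀ x ∈ XSeq {M1, M2} a k, x 0 * x 1 < 0 →
      ∃ j ≤ k, x ∈ Dset (cseq (a 0) (-a 1) j) := by
  induction k with
  | zero =>
    intro x hx _
    refine ⟨0, le_refl _, ?_⟩
    have hxa : x = a := hx
    subst hxa
    left
    funext i; fin_cases i <;> simp [cseq]
  | succ k ih =>
    intro x hx hreg
    simp only [XSeq, mem_iUnion, mem_image, mem_insert_iff, mem_singleton_iff] at hx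
    obtain ⟨A, hA, y, hy, rfl⟩ := hx
    have hyreg : y 0 * y 1 < 0 := by
      by_contra h
      push_neg at h
      rcases hA with rfl | rfl
      · rw [M1_mulVec] at hreg; simp at hreg; nlinarith
      · rw [M2_mulVec] at hreg; simp at hreg; nlinarith [mul_self_nonneg (y 1)]
    obtain ⟨j, hj, hyD⟩ := ih y hy hyreg
    set c := cseq (a 0) (-a 1) j with hc
    have hpos : 0 < c.1 ∧ 0 < c.2 := cpos _ _ ha0 (by linarith) j
    have hstep : cseq (a 0) (-a 1) (j+1) = cstep c := rfl
    rcases hA with rfl | rfl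
    · -- M1: swap, stays in Dset c
      refine ⟨j, by omega, ?_⟩
      rw [M1_mulVec]
      rcases hyD with rfl | rfl | rfl | rfl
      · right; right; right; funext i; fin_cases i <;> simp <;> rfl
      · right; right; left; funext i; fin_cases i <;> simp <;> rfl
      · right; left; funext i; fin_cases i <;> simp <;> rfl
      · left; funext i; fin_cases i <;> simp <;> rfl
    · -- M2
      refine ⟨j+1, by omega, ?_⟩
      rw [M2_mulVec] at hreg ⊢
      rw [hstep]
      rcases hyD with rfl | rfl | rfl | rfl
      · -- y = ![c.1, -c.2] : x = ![c.1 - c.2, -c.2], region forces c.2 < c.1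
        simp only [Matrix.cons_val_zero, Matrix.cons_val_one, Matrix.head_cons] at hreg ⊢
        have hlt : c.2 < c.1 := by nlinarith [hpos.1, hpos.2]
        unfold cstep; rw [if_pos hlt]
        left; funext i; fin_cases i <;> simp <;> ring
      · -- y = ![-c.1, c.2] : x = ![c.2 - c.1, c.2], region forces c.2 < c.1
        simp only [Matrix.cons_val_zero, Matrix.cons_val_one, Matrix.head_cons] at hreg ⊢
        have hlt : c.2 < c.1 := by nlinarith [hpos.1, hpos.2]
        unfold cstep; rw [if_pos hlt]
        right; left; funext i; fin_cases i <;> simp <;> ring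
      · -- y = ![c.2, -c.1] : x = ![c.2 - c.1, -c.1], region forces c.1 < c.2
        simp only [Matrix.cons_val_zero, Matrix.cons_val_one, Matrix.head_cons] at hreg ⊢
        have hlt : c.1 < c.2 := by nlinarith [hpos.1, hpos.2]
        unfold cstep; rw [if_neg (by linarith), if_pos hlt]
        left; funext i; fin_cases i <;> simp <;> ring
      · -- y = ![-c.2, c.1] : x = ![c.1 - c.2, c.1], region forces c.1 < c.2
        simp only [Matrix.cons_val_zero, Matrix.cons_val_one, Matrix.head_cons] at hreg ⊢
        have hlt : c.1 < c.2 := by nlinarith [hpos.1, hpos.2]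
        unfold cstep; rw [if_neg (by linarith), if_pos hlt]
        right; left; funext i; fin_cases i <;> simp <;> ring

def Eset (p q : ℝ) : ℕ → Set (Fin 2 → ℝ)
  | 0 => Dset (cseq p q 0)
  | k + 1 => Eset p q k ∪ Dset (cseq p q (k+1))

lemma Dfin (c : ℝ × ℝ) : (Dset c).Finite := by
  unfold Dset
  exact (Set.finite_singleton _).insert _ |>.insert _ |>.insert _

lemma Dcard (c : ℝ × ℝ) : (Dset c).ncard ≤ 4 := by
  have h1 := Set.ncard_insert_le (![c.1, -c.2])
    ({![-c.1, c.2], ![c.2, -c.1], ![-c.2, c.1]} : Set (Fin 2 → ℝ))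
  have h2 := Set.ncard_insert_le (![-c.1, c.2])
    ({![c.2, -c.1], ![-c.2, c.1]} : Set (Fin 2 → ℝ))
  have h3 := Set.ncard_insert_le (![c.2, -c.1]) ({![-c.2, c.1]} : Set (Fin 2 → ℝ))
  have h4 : ({![-c.2, c.1]} : Set (Fin 2 → ℝ)).ncard = 1 := Set.ncard_singleton _
  unfold Dset
  omega

lemma Efin (p q : ℝ) (k : ℕ) : (Eset p q k).Finite := by
  induction k with
  | zero => exact Dfin _
  | succ k ih => exact ih.union (Dfin _)

lemma Ecard (p q : ℝ) (k : ℕ) : (Eset p q k).ncard ≤ 4 * (k + 1) := by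
  induction k with
  | zero => simpa [Eset] using Dcard (cseq p q 0)
  | succ k ih =>
    have := Set.ncard_union_le (Eset p q k) (Dset (cseq p q (k+1)))
    have := Dcard (cseq p q (k+1))
    show (Eset p q k ∪ Dset (cseq p q (k+1))).ncard ≤ _
    omega

lemma Emem (p q : ℝ) (k j : ℕ) (hj : j ≤ k) : Dset (cseq p q j) ⊆ Eset p q k := by
  induction k with
  | zero => simpa using le_antisymm hj (Nat.zero_le j) ▸ (by omega : j = 0) ▸ subset_rfl
  | succ k ih =>
    rcases Nat.lt_or_ge j (k+1) with h | h
    · exact (ih (by omega)).trans subset_union_left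
    · have : j = k + 1 := by omega
      subst this
      exact subset_union_right


/-- For `a` in the interior of the fourth quadrant and `k ≥ 2`, the set of points of
`X_k(Σ₁, a)` lying in the open second or fourth quadrant has at most `4k + 4` elements. -/
theorem stmt13 (a : Fin 2 → ℝ) (ha : 0 < a 0 ∧ a 1 < 0) (k : ℕ) (hk : 2 ≤ k) :
    (XSeq {M1, M2} a k ∩ (intQ2 ∪ intQ4)).ncard ≤ 4 * k + 4 := by
  obtain ⟨ha0, ha1⟩ := ha
  have hsub : XSeq {M1, M2} a k ∩ (intQ2 ∪ intQ4) ⊆ Eset (a 0) (-a 1) k := by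
    rintro x ⟨hx, hq⟩
    have hreg : x 0 * x 1 < 0 := by
      rcases hq with h | h
      · exact mul_neg_of_neg_of_pos h.1 h.2
      · exact mul_neg_of_pos_of_neg h.1 h.2
    obtain ⟨j, hj, hD⟩ := main a ha0 ha1 k x hx hreg
    exact Emem (a 0) (-a 1) k j hj hD
  calc (XSeq {M1, M2} a k ∩ (intQ2 ∪ intQ4)).ncard
      ≤ (Eset (a 0) (-a 1) k).ncard := Set.ncard_le_ncard hsub (Efin _ _ k)
    _ ≤ 4 * (k + 1) := Ecard _ _ k
    _ ≤ 4 * k + 4 := by omega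

end
end
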